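/- Let ε, d, ν, τ > 0 with d > 2ε, let k be a positive integer, let G be a graph, let v ∈ V(G), let M be an (ε,d,νk)-regularized matching in G, and let {f_{CD}}_{(C,D)∈M} be a family of integers between −τk and τk. Suppose (T,r) is a rooted tree with v(T) ≤ (1 − 4(ε + τ/ν)/(d − 2ε))·|V(M)| such that each component of T − r has order at most τk. If V(M) ⊆ N_G(v), then there exists an (r ↪ v, V(T − r) ↪ V(M))-embedding φ of T such that for each (C,D) ∈ M we have | |C ∩ φ(T)| + f_{CD} − |D ∩ φ(T)| | ≤ τk. -/

import Mathlib

/-- A pair `(A,B)` of disjoint vertex sets is `ε`-regular in `G` if all subpairs `(A',B')`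
with `|A'| ≥ ε|A|` and `|B'| ≥ ε|B|` have density within `ε` of the density of `(A,B)`. -/
def IsRegularPair {V : Type} [Fintype V] (G : SimpleGraph V) [DecidableRel G.Adj]
    (ε : ℝ) (A B : Finset V) : Prop :=
  ∀ A' ⊆ A, ∀ B' ⊆ B, ε * A.card ≤ A'.card → ε * B.card ≤ B'.card →
    |(G.edgeDensity A' B' : ℝ) - (G.edgeDensity A B : ℝ)| < ε

/-- An `(ε,d,ℓ)`-regularized matching in `H`: a collection of pairs `(A,B)` with
`|A| = |B| ≥ ℓ`, each inducing an `ε`-regular pair of density at least `d`, all the occurring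
sets being pairwise disjoint. -/
def IsRegularizedMatching {V : Type} [Fintype V] (H : SimpleGraph V) [DecidableRel H.Adj]
    (ε d ℓ : ℝ) (M : Finset (Finset V × Finset V)) : Prop :=
  (∀ p ∈ M, ℓ ≤ (p.1.card : ℝ) ∧ p.1.card = p.2.card) ∧
  (∀ p ∈ M, Disjoint p.1 p.2 ∧ IsRegularPair H ε p.1 p.2 ∧ d ≤ (H.edgeDensity p.1 p.2 : ℝ)) ∧
  (∀ p ∈ M, ∀ q ∈ M, p ≠ q →
    Disjoint p.1 q.1 ∧ Disjoint p.1 q.2 ∧ Disjoint p.2 q.1 ∧ Disjoint p.2 q.2)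

/-- The vertex set `V(M)` of a regularized matching. -/
def matchingVerts {V : Type} [DecidableEq V] (M : Finset (Finset V × Finset V)) : Finset V :=
  M.sup fun p => p.1 ∪ p.2


set_option linter.unusedSectionVars false
set_option maxHeartbeats 4000000

namespace Stmt12Proof

open Finset SimpleGraph

/-- balancing arithmetic -/
lemma bal {Δ s t : ℝ} (h1 : |Δ| ≤ t) (h2 : |s| ≤ t) (h3 : 0 ≤ Δ → s ≤ 0)
    (h4 : Δ < 0 → 0 ≤ s) : |Δ + s| ≤ t := by
  rw [abs_le] at h1 h2 ⊢
  by_cases h : 0 ≤ Δ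
  · have := h3 h; constructor <;> linarith
  · push_neg at h; have := h4 h; constructor <;> linarith

/-- partition of a subset of the matching vertices -/
lemma card_partition {V : Type} [DecidableEq V] (M : Finset (Finset V × Finset V))
    (hdisj : ∀ p ∈ M, ∀ q ∈ M, p ≠ q →
      Disjoint p.1 q.1 ∧ Disjoint p.1 q.2 ∧ Disjoint p.2 q.1 ∧ Disjoint p.2 q.2)
    (U : Finset V) (hU : U ⊆ matchingVerts M) :
    U.card = ∑ p ∈ M, ((p.1 ∪ p.2) ∩ U).card := by
  classical
  have hdisj' : ∀ p ∈ M, ∀ q ∈ M, p ≠ q →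
      Disjoint ((p.1 ∪ p.2) ∩ U) ((q.1 ∪ q.2) ∩ U) := by
    intro p hp q hq hne
    obtain ⟨h1, h2, h3, h4⟩ := hdisj p hp q hq hne
    refine Finset.disjoint_left.mpr ?_
    intro u hu1 hu2
    rw [Finset.mem_inter, Finset.mem_union] at hu1 hu2
    rcases hu1.1 with ha | ha <;> rcases hu2.1 with hb | hb
    · exact Finset.disjoint_left.mp h1 ha hb
    · exact Finset.disjoint_left.mp h2 ha hb
    · exact Finset.disjoint_left.mp h3 ha hb
    · exact Finset.disjoint_left.mp h4 ha hb
  have hUeq : U = M.biUnion (fun p => (p.1 ∪ p.2) ∩ U) := by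
    ext u
    simp only [Finset.mem_biUnion, Finset.mem_inter]
    constructor
    · intro hu
      obtain ⟨p, hp, hup⟩ := Finset.mem_sup.mp (hU hu)
      exact ⟨p, hp, hup, hu⟩
    · rintro ⟨p, hp, _, hu⟩
      exact hu
  conv_lhs => rw [hUeq]
  exact Finset.card_biUnion hdisj'


section HelpersW
variable {W : Type}

lemma reach_of_mem_support {α : Type*} {H : SimpleGraph α} {u v : α} (p : H.Walk u v) :
    ∀ z ∈ p.support, H.Reachable u z := by
  induction p with
  | nil => intro z hz; rw [SimpleGraph.Walk.support_nil] at hz; simp at hz; subst hz; rfl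
  | cons h q ih =>
    intro z hz
    rw [SimpleGraph.Walk.support_cons] at hz
    rcases List.mem_cons.mp hz with rfl | hz
    · rfl
    · exact (Reachable.trans ⟨.cons h .nil⟩ (ih z hz))

lemma unique_nbr_of_acyclic {T : SimpleGraph W} (hTac : T.IsAcyclic) {A : Finset W}
    {x₀ x a b : W}
    (hconn : ∀ y ∈ A, ∃ p : T.Walk x₀ y, ∀ z ∈ p.support, z ∈ A)
    (hx : x ∉ A) (ha : a ∈ A) (hb : b ∈ A) (hxa : T.Adj x a) (hxb : T.Adj x b) : a = b := by
  classical
  by_contra hne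
  obtain ⟨wa, hwa⟩ := hconn a ha
  obtain ⟨wb, hwb⟩ := hconn b hb
  set q : T.Path a b := (wa.reverse.append wb).toPath with hq
  have hqsupp : ∀ z ∈ (q : T.Walk a b).support, z ∈ A := by
    intro z hz
    have := SimpleGraph.Walk.support_toPath_subset _ hz
    rw [SimpleGraph.Walk.support_append] at this
    rcases List.mem_append.mp this with h1 | h1
    · apply hwa z
      have := (SimpleGraph.Walk.support_reverse wa) ▸ h1
      simpa using this
    · exact hwb z (List.tail_subset _ h1)
  have hxq : x ∉ (q : T.Walk a b).support := fun hmem => hx (hqsupp x hmem)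
  have hc1 : (SimpleGraph.Walk.cons hxa (q : T.Walk a b)).IsPath :=
    SimpleGraph.Walk.IsPath.cons q.2 hxq
  have hcyc : (SimpleGraph.Walk.cons hxb.symm
      (SimpleGraph.Walk.cons hxa (q : T.Walk a b))).IsCycle := by
    apply SimpleGraph.Path.cons_isCycle ⟨_, hc1⟩ hxb.symm
    intro hmem
    rw [SimpleGraph.Walk.edges_cons] at hmem
    rcases List.mem_cons.mp hmem with h1 | h1
    · rw [Sym2.eq_iff] at h1
      rcases h1 with ⟨h1, h2⟩ | ⟨h1, h2⟩
      · exact hx (h1 ▸ hb)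
      · exact hne h1.symm
    · exact hxq (SimpleGraph.Walk.snd_mem_support_of_mem_edges _ h1)
  exact hTac _ hcyc

lemma color_unique {T : SimpleGraph W} {Q : Finset W} {σ₁ σ₂ : W → Bool}
    (h1 : ∀ a ∈ Q, ∀ b ∈ Q, T.Adj a b → σ₁ b = !σ₁ a)
    (h2 : ∀ a ∈ Q, ∀ b ∈ Q, T.Adj a b → σ₂ b = !σ₂ a)
    {x₀ : W} (hx₀ : x₀ ∈ Q) (hbase : σ₁ x₀ = σ₂ x₀)
    (hconn : ∀ y ∈ Q, ∃ p : T.Walk x₀ y, ∀ z ∈ p.support, z ∈ Q) :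
    ∀ y ∈ Q, σ₁ y = σ₂ y := by
  have aux : ∀ (u v2 : W) (p : T.Walk u v2), u ∈ Q → (∀ z ∈ p.support, z ∈ Q) →
      σ₁ u = σ₂ u → σ₁ v2 = σ₂ v2 := by
    intro u v2 p
    induction p with
    | nil => intro _ _ h; exact h
    | @cons u w v2 h q ih =>
      intro hu hsupp heq
      have hwQ : w ∈ Q := by
        apply hsupp w
        rw [SimpleGraph.Walk.support_cons]
        exact List.mem_cons_of_mem _ q.start_mem_support
      have : σ₁ w = σ₂ w := by
        rw [h1 u hu w hwQ h, h2 u hu w hwQ h, heq]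
      refine ih hwQ (fun z hz => hsupp z ?_) this
      rw [SimpleGraph.Walk.support_cons]
      exact List.mem_cons_of_mem _ hz
  intro y hy
  obtain ⟨p, hp⟩ := hconn y hy
  exact aux x₀ y p hx₀ hp hbase


end HelpersW

section HelpersV
variable {V : Type} [Fintype V] [DecidableEq V] {G : SimpleGraph V} [DecidableRel G.Adj]

lemma card_interedges_sum (s t : Finset V) :
    (G.interedges s t).card = ∑ a ∈ s, (t.filter (fun y => G.Adj a y)).card := by
  classical
  rw [SimpleGraph.interedges, Rel.interedges_eq_biUnion, Finset.card_biUnion]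
  · simp
  · intro a ha b hb hab
    simp only [Finset.disjoint_left, Finset.mem_map, Function.Embedding.coeFn_mk]
    rintro x ⟨y, hy, rfl⟩ ⟨z, hz, h⟩
    exact hab (by simpa using congrArg Prod.fst h.symm)

lemma isRegularPair_comm {ε : ℝ} {A B : Finset V} (h : IsRegularPair G ε A B) :
    IsRegularPair G ε B A := by
  intro B' hB' A' hA' hB'c hA'c
  have := h A' hA' B' hB' hA'c hB'c
  rwa [show G.edgeDensity B' A' = G.edgeDensity A' B' from G.edgeDensity_comm _ _,
    show G.edgeDensity B A = G.edgeDensity A B from G.edgeDensity_comm _ _]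

lemma atyp_small {ε dd : ℝ} (hε : 0 < ε) (hεd : ε ≤ dd) (X Y FX B : Finset V)
    (hreg : IsRegularPair G ε X Y) (hdens : dd ≤ (G.edgeDensity X Y : ℝ))
    (hFX : FX ⊆ X) (hFXc : ε * X.card ≤ (FX.card : ℝ)) (hFXpos : 0 < FX.card)
    (hYpos : 0 < Y.card) (hB : B ⊆ Y)
    (hbad : ∀ y ∈ B, ((FX.filter (fun x => G.Adj y x)).card : ℝ) < (dd - ε) * FX.card) :
    (B.card : ℝ) < ε * Y.card := by
  by_contra hcon
  push_neg at hcon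
  have hBne : B.Nonempty := by
    rw [← Finset.card_pos]
    have : (0:ℝ) < ε * Y.card := by positivity
    have := this.trans_le hcon
    exact_mod_cast this
  have hregapp := hreg FX hFX B hB hFXc hcon
  -- edge count bound
  have hecard : ((G.interedges FX B).card : ℝ) < (B.card : ℝ) * ((dd - ε) * FX.card) := by
    have hcomm : (G.interedges FX B).card = (G.interedges B FX).card :=
      by haveI : Std.Symm G.Adj := G.symm; exact Rel.card_interedges_comm _ _
    rw [hcomm, card_interedges_sum]
    push_cast
    calc (∑ y ∈ B, ((FX.filter (fun x => G.Adj y x)).card : ℝ))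
        < ∑ _y ∈ B, (dd - ε) * FX.card := Finset.sum_lt_sum_of_nonempty hBne hbad
      _ = (B.card : ℝ) * ((dd - ε) * FX.card) := by rw [Finset.sum_const, nsmul_eq_mul]
  have hdFXB : (G.edgeDensity FX B : ℝ) < dd - ε := by
    have hdef : (G.edgeDensity FX B : ℝ)
        = ((G.interedges FX B).card : ℝ) / ((FX.card : ℝ) * (B.card : ℝ)) := by
      rw [SimpleGraph.edgeDensity_def]
      push_cast
      ring
    rw [hdef, div_lt_iff₀ (by positivity)]
    calc ((G.interedges FX B).card : ℝ) < (B.card : ℝ) * ((dd - ε) * FX.card) := hecard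
      _ = (dd - ε) * ((FX.card : ℝ) * (B.card : ℝ)) := by ring
  rw [abs_lt] at hregapp
  linarith [hregapp.1]

/-- there is a typical, unused neighbour of `u` inside `FY`. -/
lemma exists_typical_nbr {ε dd : ℝ} (hε : 0 < ε) (hεd : ε ≤ dd)
    (X Y FX FY : Finset V)
    (hreg : IsRegularPair G ε X Y) (hdens : dd ≤ (G.edgeDensity X Y : ℝ))
    (hFX : FX ⊆ X) (hFY : FY ⊆ Y)
    (hFXc : ε * X.card ≤ (FX.card : ℝ)) (hFXpos : 0 < FX.card) (hYpos : 0 < Y.card)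
    (Bf : Finset V) (u : V)
    (Hcount : ε * Y.card + (Bf.card : ℝ) + 1 ≤ (dd - ε) * FY.card)
    (hu : (dd - ε) * FY.card ≤ ((FY.filter (fun y => G.Adj u y)).card : ℝ)) :
    ∃ y, y ∈ FY ∧ G.Adj u y ∧ y ∉ Bf ∧
      (dd - ε) * FX.card ≤ ((FX.filter (fun x => G.Adj y x)).card : ℝ) := by
  classical
  set Bad : Finset V := FY.filter
    (fun y => ¬ ((dd - ε) * FX.card ≤ ((FX.filter (fun x => G.Adj y x)).card : ℝ))) with hBad
  have hBadcard : (Bad.card : ℝ) < ε * Y.card := by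
    apply atyp_small hε hεd X Y FX Bad hreg hdens hFX hFXc hFXpos hYpos
      ((Finset.filter_subset _ _).trans hFY)
    intro y hy
    have := (Finset.mem_filter.mp hy).2
    push_neg at this
    exact this
  set good : Finset V := ((FY.filter (fun y => G.Adj u y)) \ Bf) \ Bad with hgood
  have hgoodcard : (0:ℝ) < good.card := by
    have h1 : ((FY.filter (fun y => G.Adj u y)).card : ℝ)
        ≤ (((FY.filter (fun y => G.Adj u y)) \ Bf).card : ℝ) + Bf.card := by
      have := Finset.card_le_card (Finset.subset_union_left
        (s₁ := FY.filter (fun y => G.Adj u y)) (s₂ := Bf))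
      rw [← Finset.card_sdiff_add_card] at this
      exact_mod_cast this
    have h2 : (((FY.filter (fun y => G.Adj u y)) \ Bf).card : ℝ) ≤ (good.card : ℝ) + Bad.card := by
      have := Finset.card_le_card (Finset.subset_union_left
        (s₁ := (FY.filter (fun y => G.Adj u y)) \ Bf) (s₂ := Bad))
      rw [← Finset.card_sdiff_add_card] at this
      exact_mod_cast this
    linarith
  have hgoodne : good.Nonempty := by
    rw [← Finset.card_pos]
    exact_mod_cast hgoodcard
  obtain ⟨y, hy⟩ := hgoodne
  rw [hgood, Finset.mem_sdiff, Finset.mem_sdiff, Finset.mem_filter] at hy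
  refine ⟨y, hy.1.1.1, hy.1.1.2, hy.1.2, ?_⟩
  have := hy.2
  rw [hBad, Finset.mem_filter] at this
  push_neg at this
  exact this hy.1.1.1

end HelpersV

section HelpersVW
variable {V W : Type} [Fintype V] [DecidableEq V]

/-- State of a partial embedding of the vertex set `A` into the regular pair. -/
def GoodState (G : SimpleGraph V) [DecidableRel G.Adj] (dd ε : ℝ) (T : SimpleGraph W)
    (FX FY : Finset V) (x₀ : W) (A : Finset W) (ψ : W → V) (σ : W → Bool) : Prop :=
  Set.InjOn ψ ↑A ∧ σ x₀ = false ∧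
  (∀ a ∈ A, ∀ b ∈ A, T.Adj a b → G.Adj (ψ a) (ψ b)) ∧
  (∀ a ∈ A, ∀ b ∈ A, T.Adj a b → σ b = !σ a) ∧
  (∀ x ∈ A, if σ x = true
    then ψ x ∈ FY ∧ (dd - ε) * FX.card ≤ ((FX.filter (fun z => G.Adj (ψ x) z)).card : ℝ)
    else ψ x ∈ FX ∧ (dd - ε) * FY.card ≤ ((FY.filter (fun z => G.Adj (ψ x) z)).card : ℝ))

lemma embed_into_pair {G : SimpleGraph V} [DecidableRel G.Adj] {T : SimpleGraph W}
    {ε dd : ℝ} (hε : 0 < ε) (hεd : 2 * ε < dd)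
    (X Y FX FY : Finset V)
    (hregXY : IsRegularPair G ε X Y) (hregYX : IsRegularPair G ε Y X)
    (hdXY : dd ≤ (G.edgeDensity X Y : ℝ)) (hdYX : dd ≤ (G.edgeDensity Y X : ℝ))
    (hFX : FX ⊆ X) (hFY : FY ⊆ Y)
    (hXpos : 0 < X.card) (hYpos : 0 < Y.card)
    (hFXc : ε * X.card ≤ (FX.card : ℝ)) (hFYc : ε * Y.card ≤ (FY.card : ℝ))
    (Q : Finset W) (x₀ : W) (hx₀ : x₀ ∈ Q)
    (HX : ε * X.card + Q.card ≤ (dd - ε) * FX.card)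
    (HY : ε * Y.card + Q.card ≤ (dd - ε) * FY.card)
    (hTac : T.IsAcyclic)
    (hconn : ∀ y ∈ Q, ∃ p : T.Walk x₀ y, ∀ z ∈ p.support, z ∈ Q) :
    ∃ (ψ : W → V) (σ : W → Bool), GoodState G dd ε T FX FY x₀ Q ψ σ := by
  classical
  have hεd' : ε ≤ dd := by linarith
  have hFXpos : 0 < FX.card := by
    have : (0:ℝ) < ε * X.card := by positivity
    have := this.trans_le hFXc
    exact_mod_cast this
  have hFYpos : 0 < FY.card := by
    have : (0:ℝ) < ε * Y.card := by positivity
    have := this.trans_le hFYc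
    exact_mod_cast this
  have hQ1 : (1:ℝ) ≤ Q.card := by
    have := Finset.card_pos.mpr ⟨x₀, hx₀⟩
    exact_mod_cast this
  -- the growing step
  have grow : ∀ n : ℕ, ∀ A : Finset W, A ⊆ Q → x₀ ∈ A →
      (∀ y ∈ A, ∃ p : T.Walk x₀ y, ∀ z ∈ p.support, z ∈ A) →
      (Q \ A).card = n →
      (∃ ψ σ, GoodState G dd ε T FX FY x₀ A ψ σ) →
      (∃ ψ σ, GoodState G dd ε T FX FY x₀ Q ψ σ) := by
    intro n
    induction n using Nat.strong_induction_on with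
    | _ n ih =>
      intro A hAQ hx₀A hconnA hcardA hstate
      by_cases hAeq : A = Q
      · exact hAeq ▸ hstate
      -- pick a boundary vertex
      obtain ⟨y, hyQ, hyA⟩ := Finset.exists_of_ssubset (lt_of_le_of_ne hAQ hAeq)
      obtain ⟨pw, hpw⟩ := hconn y hyQ
      have hkey : ∃ a x, a ∈ A ∧ x ∉ A ∧ x ∈ Q ∧ T.Adj a x := by
        obtain ⟨dart, hdmem, hdfst, hdsnd⟩ := pw.exists_boundary_dart (↑A : Set W)
          (Finset.mem_coe.mpr hx₀A) (fun h => hyA (Finset.mem_coe.mp h))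
        exact ⟨dart.fst, dart.snd, Finset.mem_coe.mp hdfst,
          fun h => hdsnd (Finset.mem_coe.mpr h),
          hpw _ (SimpleGraph.Walk.dart_snd_mem_support_of_mem_darts _ hdmem), dart.adj⟩
      obtain ⟨a, x, haA, hxA, hxQ, hax⟩ := hkey
      obtain ⟨ψ, σ, hinj, hσx₀, hhom, hprop, hmem⟩ := hstate
      -- forbidden set
      have hBfcard : ((A.image ψ).card : ℝ) + 1 ≤ (Q.card : ℝ) := by
        have h1 : (A.image ψ).card ≤ A.card := Finset.card_image_le
        have h2 : A.card < Q.card := Finset.card_lt_card (lt_of_le_of_ne hAQ hAeq)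
        have : (A.image ψ).card + 1 ≤ Q.card := by omega
        exact_mod_cast this
      have hmema := hmem a haA
      -- find the new image point, in the side opposite to `σ a`
      have hnext : ∃ y', (if σ a = true then y' ∈ FX else y' ∈ FY) ∧ G.Adj (ψ a) y' ∧
          y' ∉ A.image ψ ∧
          (if σ a = true
            then (dd - ε) * FY.card ≤ ((FY.filter (fun z => G.Adj y' z)).card : ℝ)
            else (dd - ε) * FX.card ≤ ((FX.filter (fun z => G.Adj y' z)).card : ℝ)) := by
        cases hσa : σ a with
        | true =>
          rw [hσa] at hmema
          simp only [if_true] at hmema ⊢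
          obtain ⟨y', h1, h2, h3, h4⟩ := exists_typical_nbr (G := G) hε hεd' Y X FY FX
            hregYX hdYX hFY hFX hFYc hFYpos hXpos (A.image ψ) (ψ a)
            (by linarith) hmema.2
          exact ⟨y', h1, h2, h3, h4⟩
        | false =>
          rw [hσa] at hmema
          simp only [Bool.false_eq_true, if_false] at hmema ⊢
          obtain ⟨y', h1, h2, h3, h4⟩ := exists_typical_nbr (G := G) hε hεd' X Y FX FY
            hregXY hdXY hFX hFY hFXc hFXpos hYpos (A.image ψ) (ψ a)
            (by linarith) hmema.2
          exact ⟨y', h1, h2, h3, h4⟩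
      obtain ⟨y', hy'mem, hy'adj, hy'new, hy'typ⟩ := hnext
      set ψ' : W → V := Function.update ψ x y' with hψ'
      set σ' : W → Bool := Function.update σ x (!σ a) with hσ'
      have hψ'old : ∀ b ∈ A, ψ' b = ψ b := by
        intro b hb
        have hbx : b ≠ x := by intro h; subst h; exact hxA hb
        rw [hψ', Function.update_of_ne hbx _ _]
      have hσ'old : ∀ b ∈ A, σ' b = σ b := by
        intro b hb
        have hbx : b ≠ x := by intro h; subst h; exact hxA hb
        rw [hσ', Function.update_of_ne hbx _ _]
      have hψ'x : ψ' x = y' := by rw [hψ', Function.update_self]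
      have hσ'x : σ' x = !σ a := by rw [hσ', Function.update_self]
      -- the new vertex is adjacent (in T, within A) only to a
      have huniq : ∀ b ∈ A, T.Adj x b → b = a :=
        fun b hb hxb => unique_nbr_of_acyclic hTac hconnA hxA hb haA hxb hax.symm
      -- new state is good
      have hstate' : GoodState G dd ε T FX FY x₀ (insert x A) ψ' σ' := by
        refine ⟨?_, ?_, ?_, ?_, ?_⟩
        · -- injectivity
          intro u hu w hw huw
          simp only [Finset.coe_insert, Set.mem_insert_iff, Finset.mem_coe] at hu hw
          rcases hu with rfl | hu <;> rcases hw with rfl | hw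
          · rfl
          · exfalso; rw [hψ'x, hψ'old w hw] at huw
            exact hy'new (by rw [huw]; exact Finset.mem_image_of_mem ψ hw)
          · exfalso; rw [hψ'x, hψ'old u hu] at huw
            exact hy'new (by rw [← huw]; exact Finset.mem_image_of_mem ψ hu)
          · rw [hψ'old u hu, hψ'old w hw] at huw
            exact hinj hu hw huw
        · rw [hσ'old x₀ hx₀A]; exact hσx₀
        · -- homomorphism
          intro u hu w hw hadj
          simp only [Finset.mem_insert] at hu hw
          rcases hu with rfl | hu <;> rcases hw with rfl | hw
          · exact absurd hadj (T.irrefl)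
          · have := huniq w hw hadj
            subst this
            rw [hψ'x, hψ'old w hw]
            exact hy'adj.symm
          · have := huniq u hu hadj.symm
            subst this
            rw [hψ'x, hψ'old u hu]
            exact hy'adj
          · rw [hψ'old u hu, hψ'old w hw]
            exact hhom u hu w hw hadj
        · -- proper colouring
          intro u hu w hw hadj
          simp only [Finset.mem_insert] at hu hw
          rcases hu with rfl | hu <;> rcases hw with rfl | hw
          · exact absurd hadj (T.irrefl)
          · have := huniq w hw hadj
            subst this
            rw [hσ'x, hσ'old w hw, Bool.not_not]
          · have := huniq u hu hadj.symm
            subst this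
            rw [hσ'x, hσ'old u hu]
          · rw [hσ'old u hu, hσ'old w hw]
            exact hprop u hu w hw hadj
        · -- membership and typicality
          intro z hz
          rcases Finset.mem_insert.mp hz with rfl | hz
          · rw [hσ'x, hψ'x]
            cases hσa : σ a with
            | true =>
              rw [hσa] at hy'mem hy'typ
              simp only [if_true] at hy'mem hy'typ
              simp only [Bool.not_true, Bool.false_eq_true, if_false]
              exact ⟨hy'mem, hy'typ⟩
            | false =>
              rw [hσa] at hy'mem hy'typ
              simp only [Bool.false_eq_true, if_false] at hy'mem hy'typ
              simp only [Bool.not_false, if_true]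
              exact ⟨hy'mem, hy'typ⟩
          · rw [hσ'old z hz, hψ'old z hz]
            exact hmem z hz
      -- recurse
      have hconnA' : ∀ z ∈ insert x A, ∃ p : T.Walk x₀ z, ∀ w ∈ p.support, w ∈ insert x A := by
        intro z hz
        rcases Finset.mem_insert.mp hz with rfl | hz
        · obtain ⟨p, hp⟩ := hconnA a haA
          refine ⟨p.concat hax, ?_⟩
          intro w hw
          rw [SimpleGraph.Walk.support_concat] at hw
          rcases List.mem_append.mp hw with hw | hw
          · exact Finset.mem_insert_of_mem (hp w hw)
          · rw [List.mem_singleton] at hw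
            subst hw
            exact Finset.mem_insert_self _ _
        · obtain ⟨p, hp⟩ := hconnA z hz
          exact ⟨p, fun w hw => Finset.mem_insert_of_mem (hp w hw)⟩
      have hmeas : (Q \ insert x A).card < n := by
        rw [← hcardA]
        apply Finset.card_lt_card
        rw [Finset.ssubset_iff_of_subset (Finset.sdiff_subset_sdiff Finset.Subset.rfl
          (Finset.subset_insert _ _))]
        exact ⟨x, Finset.mem_sdiff.mpr ⟨hxQ, hxA⟩,
          fun h => (Finset.mem_sdiff.mp h).2 (Finset.mem_insert_self _ _)⟩
      exact ih _ hmeas (insert x A) (Finset.insert_subset hxQ hAQ)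
        (Finset.mem_insert_of_mem hx₀A) hconnA' rfl ⟨ψ', σ', hstate'⟩
  -- base state on {x₀}
  have hbase : ∃ ψ σ, GoodState G dd ε T FX FY x₀ {x₀} ψ σ := by
    set Bad : Finset V := FX.filter
      (fun u => ¬ ((dd - ε) * FY.card ≤ ((FY.filter (fun z => G.Adj u z)).card : ℝ))) with hBad
    have hBadcard : (Bad.card : ℝ) < ε * X.card := by
      apply atyp_small hε hεd' Y X FY Bad hregYX hdYX hFY hFYc hFYpos hXpos
        ((Finset.filter_subset _ _).trans hFX)
      intro u hu
      have := (Finset.mem_filter.mp hu).2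
      push_neg at this
      exact this
    have : (0:ℝ) < ((FX \ Bad).card : ℝ) := by
      have h1 : (FX.card : ℝ) ≤ ((FX \ Bad).card : ℝ) + Bad.card := by
        have := Finset.card_le_card (Finset.subset_union_left (s₁ := FX) (s₂ := Bad))
        rw [← Finset.card_sdiff_add_card] at this
        exact_mod_cast this
      linarith
    have hne : (FX \ Bad).Nonempty := by
      rw [← Finset.card_pos]; exact_mod_cast this
    obtain ⟨u₀, hu₀⟩ := hne
    rw [Finset.mem_sdiff] at hu₀
    have hu₀typ : (dd - ε) * FY.card ≤ ((FY.filter (fun z => G.Adj u₀ z)).card : ℝ) := by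
      have := hu₀.2
      rw [hBad, Finset.mem_filter] at this
      push_neg at this
      exact this hu₀.1
    refine ⟨fun _ => u₀, fun _ => false, ?_, rfl, ?_, ?_, ?_⟩
    · intro p hp q hq _
      simp only [Finset.coe_singleton, Set.mem_singleton_iff] at hp hq
      rw [hp, hq]
    · intro p hp q hq hadj
      rw [Finset.mem_singleton] at hp hq
      exact absurd (hp ▸ hq ▸ hadj) (T.irrefl)
    · intro p hp q hq hadj
      rw [Finset.mem_singleton] at hp hq
      exact absurd (hp ▸ hq ▸ hadj) (T.irrefl)
    · intro z hz
      simp only [Bool.false_eq_true, if_false]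
      exact ⟨hu₀.1, hu₀typ⟩
  refine grow (Q \ {x₀}).card {x₀} (Finset.singleton_subset_iff.mpr hx₀)
    (Finset.mem_singleton_self x₀) ?_ rfl hbase
  intro z hz
  have hz' : z = x₀ := Finset.mem_singleton.mp hz
  subst hz'
  exact ⟨SimpleGraph.Walk.nil, fun w hw => by
    rw [SimpleGraph.Walk.support_nil, List.mem_singleton] at hw
    subst hw; exact Finset.mem_singleton_self _⟩

end HelpersVW

end Stmt12Proof

open Finset SimpleGraph Stmt12Proof in
/-- Balanced embedding of a rooted tree into a regularized matching seen
from a vertex `v`: the root goes to `v`, the rest to `V(M)`, and for each `(C,D) ∈ M` the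
discrepancy `|C ∩ φ(T)| + f_{CD} − |D ∩ φ(T)|` is at most `τk` in absolute value. -/
theorem stmt12 (V : Type) [Fintype V] [DecidableEq V] (G : SimpleGraph V) [DecidableRel G.Adj]
    (ε d ν τ : ℝ) (hε : 0 < ε) (hd : 2 * ε < d) (hν : 0 < ν) (hτ : 0 < τ)
    (k : ℕ) (hk : 0 < k) (v : V) (M : Finset (Finset V × Finset V))
    (hM : IsRegularizedMatching G ε d (ν * k) M)
    (f : Finset V × Finset V → ℤ) (hf : ∀ p ∈ M, |(f p : ℝ)| ≤ τ * k)
    (W : Type) [Fintype W] (T : SimpleGraph W) (hT : T.IsTree) (r : W)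
    (horder : (Fintype.card W : ℝ) ≤
      (1 - 4 * (ε + τ / ν) / (d - 2 * ε)) * ((matchingVerts M).card : ℝ))
    (hcomp : ∀ (a : W) (ha : a ≠ r),
      ((((T.induce {w : W | w ≠ r}).connectedComponentMk ⟨a, ha⟩).supp.ncard : ℝ) ≤ τ * k))
    (hnbr : ∀ u ∈ matchingVerts M, G.Adj v u) :
    ∃ φ : T →g G, Function.Injective φ ∧ φ r = v ∧
      (∀ a : W, a ≠ r → φ a ∈ matchingVerts M) ∧
      (∀ p ∈ M,
        |(((p.1 : Set V) ∩ Set.range ⇑φ).ncard : ℝ) + (f p : ℝ)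
            - (((p.2 : Set V) ∩ Set.range ⇑φ).ncard : ℝ)| ≤ τ * k) := by
  classical
  obtain ⟨hM1, hM2, hM3⟩ := hM
  have hWpos : 0 < Fintype.card W := Fintype.card_pos_iff.mpr ⟨r⟩
  have hτk : (0:ℝ) < τ * k := by
    have : (0:ℝ) < k := by exact_mod_cast hk
    positivity
  -- M is nonempty
  have hMne : M.Nonempty := by
    by_contra h
    rw [Finset.not_nonempty_iff_eq_empty] at h
    subst h
    simp only [matchingVerts, Finset.sup_empty, Finset.bot_eq_empty, Finset.card_empty,
      Nat.cast_zero, mul_zero] at horder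
    have : (0:ℝ) < Fintype.card W := by exact_mod_cast hWpos
    linarith
  obtain ⟨p₀, hp₀⟩ := hMne
  have hd1 : d ≤ 1 := by
    refine (hM2 p₀ hp₀).2.2.trans ?_
    exact_mod_cast G.edgeDensity_le_one _ _
  have hd2ε : 0 < d - 2*ε := by linarith
  have hτν : 0 < τ/ν := div_pos hτ hν
  set β : ℝ := 2*(ε + τ/ν)/(d - 2*ε) with hβ
  have hβmul : β * (d - 2*ε) = 2*(ε + τ/ν) := div_mul_cancel₀ _ (ne_of_gt hd2ε)
  have hβpos : 0 < β := by
    rw [hβ]; positivity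
  have hβge : 2*(ε + τ/ν) ≤ β := by
    rw [hβ, le_div_iff₀ hd2ε]
    nlinarith
  have hcoeff : (1 : ℝ) - 4*(ε + τ/ν)/(d-2*ε) = 1 - 2*β := by rw [hβ]; ring
  rw [hcoeff] at horder
  have hvnot : v ∉ matchingVerts M := fun h => G.irrefl (hnbr v h)
  set T' := T.induce {w : W | w ≠ r} with hT'def
  set R₀ : Finset W := Finset.univ.erase r with hR₀
  have hR₀mem : ∀ a : W, a ∈ R₀ ↔ a ≠ r := by
    intro a; rw [hR₀, Finset.mem_erase]; simp
  have hR₀card : (R₀.card : ℝ) = (Fintype.card W : ℝ) - 1 := by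
    have h1 : R₀.card = Fintype.card W - 1 := by
      rw [hR₀, Finset.card_erase_of_mem (Finset.mem_univ r), Finset.card_univ]
    rw [h1, Nat.cast_sub hWpos, Nat.cast_one]
  -- the matching vertex count
  have hVM : ((matchingVerts M).card : ℝ) = ∑ p ∈ M, ((p.1.card : ℝ) + p.2.card) := by
    have h0 := card_partition M hM3 (matchingVerts M) (le_refl _)
    have h1 : ∀ p ∈ M, ((p.1 ∪ p.2) ∩ matchingVerts M).card = p.1.card + p.2.card := by
      intro p hp
      have hsub : p.1 ∪ p.2 ⊆ matchingVerts M :=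
        Finset.le_sup (f := fun q => q.1 ∪ q.2) hp
      rw [Finset.inter_eq_left.mpr hsub, Finset.card_union_of_disjoint (hM2 p hp).1]
    rw [h0]
    push_cast
    exact Finset.sum_congr rfl (fun p hp => by rw [h1 p hp]; push_cast; ring)
  -- the invariant-growing step
  have grow : ∀ n : ℕ, ∀ P : Finset W, P ⊆ R₀ →
      (∀ (a b : W) (ha : a ≠ r) (hb : b ≠ r), a ∈ P →
        T'.Reachable ⟨a, ha⟩ ⟨b, hb⟩ → b ∈ P) →
      (R₀ \ P).card = n →
      (∃ ψ : W → V,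
        (∀ a ∈ P, ∀ b ∈ P, T.Adj a b → G.Adj (ψ a) (ψ b)) ∧
        Set.InjOn ψ ↑P ∧
        (∀ a ∈ P, ψ a ∈ matchingVerts M) ∧
        (∀ p ∈ M, |((p.1 ∩ P.image ψ).card : ℝ) + (f p : ℝ)
          - ((p.2 ∩ P.image ψ).card : ℝ)| ≤ τ * k)) →
      (∃ ψ : W → V,
        (∀ a ∈ R₀, ∀ b ∈ R₀, T.Adj a b → G.Adj (ψ a) (ψ b)) ∧
        Set.InjOn ψ ↑R₀ ∧
        (∀ a ∈ R₀, ψ a ∈ matchingVerts M) ∧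
        (∀ p ∈ M, |((p.1 ∩ R₀.image ψ).card : ℝ) + (f p : ℝ)
          - ((p.2 ∩ R₀.image ψ).card : ℝ)| ≤ τ * k)) := by
    intro n
    induction n using Nat.strong_induction_on with
    | _ n ih =>
      intro P hPR hCC hcard hInv
      by_cases hPeq : P = R₀
      · exact hPeq ▸ hInv
      obtain ⟨a₀, ha₀R, ha₀P⟩ := Finset.exists_of_ssubset (lt_of_le_of_ne hPR hPeq)
      have ha₀ : a₀ ≠ r := (hR₀mem a₀).mp ha₀R
      set Q : Finset W := Finset.univ.filter
        (fun b => ∃ hb : b ≠ r, T'.Reachable ⟨a₀, ha₀⟩ ⟨b, hb⟩) with hQdef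
      have hmemQ : ∀ b : W, b ∈ Q ↔ ∃ hb : b ≠ r, T'.Reachable ⟨a₀, ha₀⟩ ⟨b, hb⟩ := by
        intro b; rw [hQdef, Finset.mem_filter]; simp
      have ha₀Q : a₀ ∈ Q := (hmemQ a₀).mpr ⟨ha₀, Reachable.refl _⟩
      have hQR : Q ⊆ R₀ := by
        intro b hb
        obtain ⟨hb', _⟩ := (hmemQ b).mp hb
        exact (hR₀mem b).mpr hb'
      have hQP : ∀ b ∈ Q, b ∉ P := by
        intro b hb hbP
        obtain ⟨hb', hreach⟩ := (hmemQ b).mp hb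
        exact ha₀P (hCC b a₀ hb' ha₀ hbP hreach.symm)
      have hPnQ : ∀ b ∈ P, b ∉ Q := fun b hb hbQ => hQP b hbQ hb
      have hCC' : ∀ (a b : W) (ha : a ≠ r) (hb : b ≠ r), a ∈ P ∪ Q →
          T'.Reachable ⟨a, ha⟩ ⟨b, hb⟩ → b ∈ P ∪ Q := by
        intro a b ha hb haPQ hreach
        rcases Finset.mem_union.mp haPQ with haP | haQ
        · exact Finset.mem_union_left _ (hCC a b ha hb haP hreach)
        · obtain ⟨ha', hr0⟩ := (hmemQ a).mp haQ
          exact Finset.mem_union_right _ ((hmemQ b).mpr ⟨hb, hr0.trans hreach⟩)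
      -- size of the component
      have hQcard : (Q.card : ℝ) ≤ τ * k := by
        have hset : (↑Q : Set W)
            = Subtype.val '' ((T'.connectedComponentMk ⟨a₀, ha₀⟩).supp) := by
          ext b
          simp only [Finset.mem_coe, Set.mem_image]
          rw [hmemQ b]
          constructor
          · rintro ⟨hb, hreach⟩
            exact ⟨⟨b, hb⟩,
              (SimpleGraph.ConnectedComponent.mem_supp_iff _ _).mpr
                (SimpleGraph.ConnectedComponent.sound hreach.symm), rfl⟩
          · rintro ⟨⟨b', hb'⟩, hmem, rfl⟩
            exact ⟨hb', (SimpleGraph.ConnectedComponent.eq.mp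
              ((SimpleGraph.ConnectedComponent.mem_supp_iff _ _).mp hmem)).symm⟩
        have h1 : Q.card = ((T'.connectedComponentMk ⟨a₀, ha₀⟩).supp).ncard := by
          rw [← Set.ncard_coe_finset, hset,
            Set.ncard_image_of_injective _ Subtype.val_injective]
        rw [h1]
        exact hcomp a₀ ha₀
      -- connectivity of the component inside T
      have hconnQ : ∀ y ∈ Q, ∃ p : T.Walk a₀ y, ∀ z ∈ p.support, z ∈ Q := by
        intro y hy
        obtain ⟨hy', hreach⟩ := (hmemQ y).mp hy
        obtain ⟨pw⟩ := hreach
        refine ⟨pw.map (SimpleGraph.Embedding.induce {w : W | w ≠ r}).toHom, ?_⟩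
        intro z hz
        replace hz : z ∈ pw.support.map (SimpleGraph.Embedding.induce (G := T) {w : W | w ≠ r}).toHom := by
          rw [← SimpleGraph.Walk.support_map]; exact hz
        obtain ⟨z', hz', rfl⟩ := List.mem_map.mp hz
        have hre : T'.Reachable ⟨a₀, ha₀⟩ z' := reach_of_mem_support pw z' hz'
        exact (hmemQ _).mpr ⟨z'.2, hre⟩
      obtain ⟨ψ, hψhom, hψinj, hψmaps, hψdisc⟩ := hInv
      set U : Finset V := P.image ψ with hUdef
      have hUcard : U.card = P.card := Finset.card_image_of_injOn hψinj
      have hUsub : U ⊆ matchingVerts M := by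
        intro u hu
        obtain ⟨a, haP, rfl⟩ := Finset.mem_image.mp hu
        exact hψmaps a haP
      -- find an available pair
      have hpick : ∃ p ∈ M, (β * p.1.card + τ * k ≤ ((p.1 \ U).card : ℝ)) ∧
          (β * p.1.card + τ * k ≤ ((p.2 \ U).card : ℝ)) := by
        by_contra hno
        push_neg at hno
        have key : ∀ p ∈ M, (2 - 2*β - 4*(τ/ν)) * (p.1.card : ℝ)
            < ((p.1 ∩ U).card : ℝ) + ((p.2 ∩ U).card : ℝ) := by
          intro p hp
          have hm1 : ν * k ≤ (p.1.card : ℝ) := (hM1 p hp).1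
          have hm2 : ((p.2.card : ℕ) : ℝ) = (p.1.card : ℝ) := by
            exact_mod_cast congrArg Nat.cast (hM1 p hp).2.symm
          have hτm : τ * k ≤ (τ/ν) * p.1.card := by
            rw [div_mul_eq_mul_div, le_div_iff₀ hν]
            nlinarith
          have hsplit1 : ((p.1 ∩ U).card : ℝ) + ((p.1 \ U).card : ℝ) = p.1.card := by
            exact_mod_cast congrArg Nat.cast (Finset.card_inter_add_card_sdiff p.1 U)
          have hsplit2 : ((p.2 ∩ U).card : ℝ) + ((p.2 \ U).card : ℝ) = p.1.card := by
            rw [← hm2]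
            exact_mod_cast congrArg Nat.cast (Finset.card_inter_add_card_sdiff p.2 U)
          have hdiscp := hψdisc p hp
          rw [abs_le] at hdiscp
          have hfp := hf p hp
          rw [abs_le] at hfp
          by_cases hc1 : β * p.1.card + τ * k ≤ ((p.1 \ U).card : ℝ)
          · have hs := hno p hp hc1
            -- p.2 side is nearly full
            have hd2 : (p.1.card : ℝ) - β * p.1.card - τ * k < ((p.2 ∩ U).card : ℝ) := by
              linarith
            have hd1 : ((p.1 ∩ U).card : ℝ) ≥ ((p.2 ∩ U).card : ℝ) - 2 * (τ * k) := by
              linarith [hdiscp.1, hdiscp.2, hfp.1, hfp.2]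
            linarith
          · push_neg at hc1
            have hd1 : (p.1.card : ℝ) - β * p.1.card - τ * k < ((p.1 ∩ U).card : ℝ) := by
              linarith
            have hd2 : ((p.2 ∩ U).card : ℝ) ≥ ((p.1 ∩ U).card : ℝ) - 2 * (τ * k) := by
              linarith [hdiscp.1, hdiscp.2, hfp.1, hfp.2]
            linarith
        have hUparts : (U.card : ℝ)
            = ∑ p ∈ M, (((p.1 ∩ U).card : ℝ) + ((p.2 ∩ U).card : ℝ)) := by
          have h0 := card_partition M hM3 U hUsub
          have h1 : ∀ p ∈ M, ((p.1 ∪ p.2) ∩ U).card = (p.1 ∩ U).card + (p.2 ∩ U).card := by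
            intro p hp
            rw [Finset.union_inter_distrib_right]
            exact Finset.card_union_of_disjoint
              (Finset.disjoint_of_subset_left Finset.inter_subset_left
                (Finset.disjoint_of_subset_right Finset.inter_subset_left (hM2 p hp).1))
          rw [h0]
          push_cast
          exact Finset.sum_congr rfl (fun p hp => by rw [h1 p hp]; push_cast; ring)
        have hlt : ∑ p ∈ M, (2 - 2*β - 4*(τ/ν)) * (p.1.card : ℝ) < (U.card : ℝ) := by
          rw [hUparts]
          exact Finset.sum_lt_sum_of_nonempty ⟨p₀, hp₀⟩ key
        have hL : ∑ p ∈ M, (2 - 2*β - 4*(τ/ν)) * (p.1.card : ℝ)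
            = (1 - β - 2*(τ/ν)) * ((matchingVerts M).card : ℝ) := by
          rw [hVM, Finset.mul_sum]
          refine Finset.sum_congr rfl (fun p hp => ?_)
          have hm2 : ((p.2.card : ℕ) : ℝ) = (p.1.card : ℝ) := by
            exact_mod_cast congrArg Nat.cast (hM1 p hp).2.symm
          rw [hm2]; ring
        have hVMpos : (0:ℝ) ≤ ((matchingVerts M).card : ℝ) := Nat.cast_nonneg _
        have hc2 : (1-2*β) * ((matchingVerts M).card : ℝ)
            ≤ (1-β-2*(τ/ν)) * ((matchingVerts M).card : ℝ) := by
          nlinarith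
        have hUP : (U.card : ℝ) = (P.card : ℝ) := by exact_mod_cast congrArg Nat.cast hUcard
        have hPle : (P.card : ℝ) ≤ (R₀.card : ℝ) := by
          exact_mod_cast Finset.card_le_card hPR
        rw [hL] at hlt
        linarith
      obtain ⟨p, hpM, hav1, hav2⟩ := hpick
      set FX : Finset V := p.1 \ U with hFXdef
      set FY : Finset V := p.2 \ U with hFYdef
      have hdisjp : Disjoint p.1 p.2 := (hM2 p hpM).1
      have hregp : IsRegularPair G ε p.1 p.2 := (hM2 p hpM).2.1
      have hdensp : d ≤ (G.edgeDensity p.1 p.2 : ℝ) := (hM2 p hpM).2.2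
      have hregp' : IsRegularPair G ε p.2 p.1 := isRegularPair_comm hregp
      have hdensp' : d ≤ (G.edgeDensity p.2 p.1 : ℝ) := by
        rw [show G.edgeDensity p.2 p.1 = G.edgeDensity p.1 p.2 from G.edgeDensity_comm _ _]
        exact hdensp
      have hm1 : ν * k ≤ (p.1.card : ℝ) := (hM1 p hpM).1
      have hm2 : ((p.2.card : ℕ) : ℝ) = (p.1.card : ℝ) := by
        exact_mod_cast congrArg Nat.cast (hM1 p hpM).2.symm
      have hmpos : (0:ℝ) < (p.1.card : ℝ) := by
        have : (0:ℝ) < ν * k := by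
          have : (0:ℝ) < k := by exact_mod_cast hk
          positivity
        linarith
      have hXpos : 0 < p.1.card := by exact_mod_cast hmpos
      have hYpos : 0 < p.2.card := by
        have : (0:ℝ) < (p.2.card : ℝ) := by rw [hm2]; exact hmpos
        exact_mod_cast this
      have hτm : τ * k ≤ (τ/ν) * p.1.card := by
        rw [div_mul_eq_mul_div, le_div_iff₀ hν]
        nlinarith
      have hFXle : FX ⊆ p.1 := Finset.sdiff_subset
      have hFYle : FY ⊆ p.2 := Finset.sdiff_subset
      have hβε : ε ≤ β := by nlinarith
      have hFXc : ε * p.1.card ≤ (FX.card : ℝ) := by nlinarith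
      have hFYc : ε * p.2.card ≤ (FY.card : ℝ) := by rw [hm2]; nlinarith
      have HX : ε * p.1.card + Q.card ≤ (d - ε) * FX.card := by
        have e1 : (d-2*ε) * (β * (p.1.card:ℝ)) ≤ (d-2*ε) * (FX.card : ℝ) :=
          mul_le_mul_of_nonneg_left (by linarith) hd2ε.le
        have e2 : (d-2*ε) * (β * (p.1.card:ℝ)) = 2*(ε+τ/ν) * p.1.card := by
          rw [← hβmul]; ring
        have e3 : (d-2*ε) * (FX.card : ℝ) ≤ (d-ε) * (FX.card : ℝ) :=
          mul_le_mul_of_nonneg_right (by linarith) (Nat.cast_nonneg _)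
        have e5 : (0:ℝ) ≤ ε * p.1.card := by positivity
        nlinarith
      have HY : ε * p.2.card + Q.card ≤ (d - ε) * FY.card := by
        have e1 : (d-2*ε) * (β * (p.1.card:ℝ)) ≤ (d-2*ε) * (FY.card : ℝ) :=
          mul_le_mul_of_nonneg_left (by linarith) hd2ε.le
        have e2 : (d-2*ε) * (β * (p.1.card:ℝ)) = 2*(ε+τ/ν) * p.1.card := by
          rw [← hβmul]; ring
        have e3 : (d-2*ε) * (FY.card : ℝ) ≤ (d-ε) * (FY.card : ℝ) :=
          mul_le_mul_of_nonneg_right (by linarith) (Nat.cast_nonneg _)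
        have e5 : (0:ℝ) ≤ ε * p.1.card := by positivity
        rw [hm2]
        nlinarith
      -- run the embedding in both orientations
      obtain ⟨ψ₁, σ₁, hg₁⟩ := embed_into_pair (G := G) (T := T) hε hd p.1 p.2 FX FY
        hregp hregp' hdensp hdensp' hFXle hFYle hXpos hYpos hFXc hFYc Q a₀ ha₀Q HX HY
        hT.2 hconnQ
      obtain ⟨ψ₂, σ₂, hg₂⟩ := embed_into_pair (G := G) (T := T) hε hd p.2 p.1 FY FX
        hregp' hregp hdensp' hdensp hFYle hFXle hYpos hXpos hFYc hFXc Q a₀ ha₀Q HY HX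
        hT.2 hconnQ
      obtain ⟨hinj₁, hσ₁₀, hhom₁, hprop₁, hmem₁⟩ := hg₁
      obtain ⟨hinj₂, hσ₂₀, hhom₂, hprop₂, hmem₂⟩ := hg₂
      have hσeq : ∀ y ∈ Q, σ₁ y = σ₂ y :=
        color_unique hprop₁ hprop₂ ha₀Q (hσ₁₀.trans hσ₂₀.symm) hconnQ
      set Qf := Q.filter (fun z => σ₁ z = false) with hQf
      set Qt := Q.filter (fun z => σ₁ z = true) with hQt
      have heo : Qf.card + Qt.card = Q.card := by
        have h := Finset.card_filter_add_card_filter_not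
          (s := Q) (p := fun z => σ₁ z = false)
        have h2 : Q.filter (fun z => ¬ σ₁ z = false) = Qt := by
          apply Finset.filter_congr
          intro z _
          cases σ₁ z <;> simp
        rw [h2] at h
        exact h
      have hQfcast : (Qf.card : ℝ) + (Qt.card : ℝ) ≤ τ * k := by
        have : ((Qf.card + Qt.card : ℕ) : ℝ) ≤ τ * k := by rw [heo]; exact hQcard
        push_cast at this
        linarith
      have habsdiff : |(Qf.card : ℝ) - (Qt.card : ℝ)| ≤ τ * k := by
        rw [abs_le]
        constructor
        · have : (0:ℝ) ≤ (Qf.card : ℝ) := Nat.cast_nonneg _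
          linarith
        · have : (0:ℝ) ≤ (Qt.card : ℝ) := Nat.cast_nonneg _
          linarith
      -- image identities
      have himg1C : p.1 ∩ Q.image ψ₁ = Qf.image ψ₁ := by
        ext u
        simp only [Finset.mem_inter, Finset.mem_image, hQf, Finset.mem_filter]
        constructor
        · rintro ⟨hu1, x, hxQ, rfl⟩
          refine ⟨x, ⟨hxQ, ?_⟩, rfl⟩
          cases hσx : σ₁ x with
          | true =>
            exfalso
            have hmm := hmem₁ x hxQ
            rw [hσx] at hmm
            simp only [if_true] at hmm
            exact (Finset.disjoint_left.mp hdisjp hu1) (hFYle hmm.1)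
          | false => rfl
        · rintro ⟨x, ⟨hxQ, hxf⟩, rfl⟩
          have hmm := hmem₁ x hxQ
          rw [hxf] at hmm
          simp only [Bool.false_eq_true, if_false] at hmm
          exact ⟨hFXle hmm.1, x, hxQ, rfl⟩
      have himg1D : p.2 ∩ Q.image ψ₁ = Qt.image ψ₁ := by
        ext u
        simp only [Finset.mem_inter, Finset.mem_image, hQt, Finset.mem_filter]
        constructor
        · rintro ⟨hu1, x, hxQ, rfl⟩
          refine ⟨x, ⟨hxQ, ?_⟩, rfl⟩
          cases hσx : σ₁ x with
          | false =>
            exfalso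
            have hmm := hmem₁ x hxQ
            rw [hσx] at hmm
            simp only [Bool.false_eq_true, if_false] at hmm
            exact (Finset.disjoint_left.mp hdisjp (hFXle hmm.1)) hu1
          | true => rfl
        · rintro ⟨x, ⟨hxQ, hxf⟩, rfl⟩
          have hmm := hmem₁ x hxQ
          rw [hxf] at hmm
          simp only [if_true] at hmm
          exact ⟨hFYle hmm.1, x, hxQ, rfl⟩
      have hQt2 : Q.filter (fun z => σ₂ z = true) = Qt := by
        rw [hQt]
        apply Finset.filter_congr
        intro z hz
        rw [hσeq z hz]
      have hQf2 : Q.filter (fun z => σ₂ z = false) = Qf := by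
        rw [hQf]
        apply Finset.filter_congr
        intro z hz
        rw [hσeq z hz]
      have himg2C : p.1 ∩ Q.image ψ₂ = Qt.image ψ₂ := by
        rw [← hQt2]
        ext u
        simp only [Finset.mem_inter, Finset.mem_image, Finset.mem_filter]
        constructor
        · rintro ⟨hu1, x, hxQ, rfl⟩
          refine ⟨x, ⟨hxQ, ?_⟩, rfl⟩
          cases hσx : σ₂ x with
          | false =>
            exfalso
            have hmm := hmem₂ x hxQ
            rw [hσx] at hmm
            simp only [Bool.false_eq_true, if_false] at hmm
            exact (Finset.disjoint_left.mp hdisjp hu1) (hFYle hmm.1)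
          | true => rfl
        · rintro ⟨x, ⟨hxQ, hxf⟩, rfl⟩
          have hmm := hmem₂ x hxQ
          rw [hxf] at hmm
          simp only [if_true] at hmm
          exact ⟨hFXle hmm.1, x, hxQ, rfl⟩
      have himg2D : p.2 ∩ Q.image ψ₂ = Qf.image ψ₂ := by
        rw [← hQf2]
        ext u
        simp only [Finset.mem_inter, Finset.mem_image, Finset.mem_filter]
        constructor
        · rintro ⟨hu1, x, hxQ, rfl⟩
          refine ⟨x, ⟨hxQ, ?_⟩, rfl⟩
          cases hσx : σ₂ x with
          | true =>
            exfalso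
            have hmm := hmem₂ x hxQ
            rw [hσx] at hmm
            simp only [if_true] at hmm
            exact (Finset.disjoint_left.mp hdisjp (hFXle hmm.1)) hu1
          | false => rfl
        · rintro ⟨x, ⟨hxQ, hxf⟩, rfl⟩
          have hmm := hmem₂ x hxQ
          rw [hxf] at hmm
          simp only [Bool.false_eq_true, if_false] at hmm
          exact ⟨hFYle hmm.1, x, hxQ, rfl⟩
      have hQfsub : (↑Qf : Set W) ⊆ ↑Q := Finset.coe_subset.mpr (Finset.filter_subset _ _)
      have hQtsub : (↑Qt : Set W) ⊆ ↑Q := Finset.coe_subset.mpr (Finset.filter_subset _ _)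
      have hcard1f : (Qf.image ψ₁).card = Qf.card :=
        Finset.card_image_of_injOn (hinj₁.mono hQfsub)
      have hcard1t : (Qt.image ψ₁).card = Qt.card :=
        Finset.card_image_of_injOn (hinj₁.mono hQtsub)
      have hcard2f : (Qf.image ψ₂).card = Qf.card :=
        Finset.card_image_of_injOn (hinj₂.mono hQfsub)
      have hcard2t : (Qt.image ψ₂).card = Qt.card :=
        Finset.card_image_of_injOn (hinj₂.mono hQtsub)
      have hΔabs := hψdisc p hpM
      -- choose the orientation
      have key : ∃ (ψQ : W → V) (cC cD : ℕ), Set.InjOn ψQ ↑Q ∧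
          (∀ a ∈ Q, ∀ b ∈ Q, T.Adj a b → G.Adj (ψQ a) (ψQ b)) ∧
          (∀ x ∈ Q, ψQ x ∈ FX ∪ FY) ∧
          (p.1 ∩ Q.image ψQ).card = cC ∧ (p.2 ∩ Q.image ψQ).card = cD ∧
          (|(((p.1 ∩ U).card : ℝ) + (f p : ℝ) - ((p.2 ∩ U).card : ℝ))
            + ((cC : ℝ) - (cD : ℝ))| ≤ τ * k) := by
        have hmemX1 : ∀ x ∈ Q, ψ₁ x ∈ FX ∪ FY := by
          intro x hx
          have hmm := hmem₁ x hx
          cases hσx : σ₁ x with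
          | true =>
            rw [hσx] at hmm; simp only [if_true] at hmm
            exact Finset.mem_union_right _ hmm.1
          | false =>
            rw [hσx] at hmm; simp only [Bool.false_eq_true, if_false] at hmm
            exact Finset.mem_union_left _ hmm.1
        have hmemX2 : ∀ x ∈ Q, ψ₂ x ∈ FX ∪ FY := by
          intro x hx
          have hmm := hmem₂ x hx
          cases hσx : σ₂ x with
          | true =>
            rw [hσx] at hmm; simp only [if_true] at hmm
            exact Finset.mem_union_left _ hmm.1
          | false =>
            rw [hσx] at hmm; simp only [Bool.false_eq_true, if_false] at hmm
            exact Finset.mem_union_right _ hmm.1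
        by_cases hΔ : 0 ≤ ((p.1 ∩ U).card : ℝ) + (f p : ℝ) - ((p.2 ∩ U).card : ℝ)
        · by_cases hfo : Qf.card ≤ Qt.card
          · refine ⟨ψ₁, Qf.card, Qt.card, hinj₁, hhom₁, hmemX1,
              by rw [himg1C]; exact hcard1f, by rw [himg1D]; exact hcard1t, ?_⟩
            refine bal hΔabs habsdiff (fun _ => ?_) (fun h => absurd hΔ (not_le.mpr h))
            have : (Qf.card : ℝ) ≤ (Qt.card : ℝ) := by exact_mod_cast hfo
            linarith
          · push_neg at hfo
            refine ⟨ψ₂, Qt.card, Qf.card, hinj₂, hhom₂, hmemX2,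
              by rw [himg2C]; exact hcard2t, by rw [himg2D]; exact hcard2f, ?_⟩
            have habsdiff' : |(Qt.card : ℝ) - (Qf.card : ℝ)| ≤ τ * k := by
              rw [abs_sub_comm]; exact habsdiff
            refine bal hΔabs habsdiff' (fun _ => ?_) (fun h => absurd hΔ (not_le.mpr h))
            have : (Qt.card : ℝ) ≤ (Qf.card : ℝ) := by exact_mod_cast hfo.le
            linarith
        · push_neg at hΔ
          by_cases hfo : Qt.card ≤ Qf.card
          · refine ⟨ψ₁, Qf.card, Qt.card, hinj₁, hhom₁, hmemX1,
              by rw [himg1C]; exact hcard1f, by rw [himg1D]; exact hcard1t, ?_⟩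
            refine bal hΔabs habsdiff (fun h => absurd h (not_le.mpr hΔ)) (fun _ => ?_)
            have : (Qt.card : ℝ) ≤ (Qf.card : ℝ) := by exact_mod_cast hfo
            linarith
          · push_neg at hfo
            refine ⟨ψ₂, Qt.card, Qf.card, hinj₂, hhom₂, hmemX2,
              by rw [himg2C]; exact hcard2t, by rw [himg2D]; exact hcard2f, ?_⟩
            have habsdiff' : |(Qt.card : ℝ) - (Qf.card : ℝ)| ≤ τ * k := by
              rw [abs_sub_comm]; exact habsdiff
            refine bal hΔabs habsdiff' (fun h => absurd h (not_le.mpr hΔ)) (fun _ => ?_)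
            have : (Qf.card : ℝ) ≤ (Qt.card : ℝ) := by exact_mod_cast hfo.le
            linarith
      obtain ⟨ψQ, cC, cD, hQinj, hQhom, hQmemU, hc1, hc2, hbalance⟩ := key
      -- combine the embeddings
      set ψ' : W → V := fun w => if w ∈ Q then ψQ w else ψ w with hψ'def
      have hψ'Q : ∀ b ∈ Q, ψ' b = ψQ b := fun b hb => if_pos hb
      have hψ'P : ∀ b ∈ P, ψ' b = ψ b := fun b hb => if_neg (hPnQ b hb)
      have hPimg : P.image ψ' = U := by
        rw [hUdef]
        exact Finset.image_congr (fun x hx => hψ'P x hx)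
      have hQimg : Q.image ψ' = Q.image ψQ :=
        Finset.image_congr (fun x hx => hψ'Q x hx)
      have himgU : (P ∪ Q).image ψ' = U ∪ Q.image ψQ := by
        rw [Finset.image_union, hPimg, hQimg]
      have hQImsub : Q.image ψQ ⊆ FX ∪ FY := by
        intro u hu
        obtain ⟨x, hx, rfl⟩ := Finset.mem_image.mp hu
        exact hQmemU x hx
      have hQImsub' : Q.image ψQ ⊆ p.1 ∪ p.2 :=
        hQImsub.trans (Finset.union_subset_union hFXle hFYle)
      have hUdisjIm : Disjoint U (Q.image ψQ) := by
        have h1 : Disjoint U FX := Finset.disjoint_sdiff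
        have h2 : Disjoint U FY := Finset.disjoint_sdiff
        exact Disjoint.mono_right hQImsub (Finset.disjoint_union_right.mpr ⟨h1, h2⟩)
      -- recurse with the enlarged invariant
      refine ih ((R₀ \ (P ∪ Q)).card) ?_ (P ∪ Q) (Finset.union_subset hPR hQR) hCC' rfl
        ⟨ψ', ?_, ?_, ?_, ?_⟩
      · rw [← hcard]
        apply Finset.card_lt_card
        rw [Finset.ssubset_iff_of_subset (Finset.sdiff_subset_sdiff Finset.Subset.rfl
          Finset.subset_union_left)]
        exact ⟨a₀, Finset.mem_sdiff.mpr ⟨ha₀R, ha₀P⟩,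
          fun h => (Finset.mem_sdiff.mp h).2 (Finset.mem_union_right _ ha₀Q)⟩
      · -- homomorphism
        intro a ha b hb hadj
        have hsep : ∀ a' ∈ P, ∀ b' ∈ Q, ¬ T.Adj a' b' := by
          intro a' ha' b' hb' hadj'
          obtain ⟨hb'', hreach⟩ := (hmemQ b').mp hb'
          have ha'' : a' ≠ r := (hR₀mem a').mp (hPR ha')
          have hadj'' : T'.Adj ⟨b', hb''⟩ ⟨a', ha''⟩ := hadj'.symm
          exact hQP a' ((hmemQ a').mpr ⟨ha'', hreach.trans hadj''.reachable⟩) ha'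
        rcases Finset.mem_union.mp ha with haP | haQ <;>
          rcases Finset.mem_union.mp hb with hbP | hbQ
        · rw [hψ'P a haP, hψ'P b hbP]; exact hψhom a haP b hbP hadj
        · exact absurd hadj (hsep a haP b hbQ)
        · exact absurd hadj.symm (hsep b hbP a haQ)
        · rw [hψ'Q a haQ, hψ'Q b hbQ]; exact hQhom a haQ b hbQ hadj
      · -- injectivity
        intro u hu w hw heq
        simp only [Finset.coe_union, Set.mem_union, Finset.mem_coe] at hu hw
        rcases hu with hu | hu <;> rcases hw with hw | hw
        · exact hψinj hu hw (by rw [← hψ'P u hu, ← hψ'P w hw]; exact heq)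
        · exfalso
          rw [hψ'P u hu, hψ'Q w hw] at heq
          exact (Finset.disjoint_left.mp hUdisjIm (Finset.mem_image_of_mem ψ hu))
            (by rw [heq]; exact Finset.mem_image_of_mem ψQ hw)
        · exfalso
          rw [hψ'Q u hu, hψ'P w hw] at heq
          exact (Finset.disjoint_left.mp hUdisjIm (Finset.mem_image_of_mem ψ hw))
            (by rw [← heq]; exact Finset.mem_image_of_mem ψQ hu)
        · exact hQinj hu hw (by rw [← hψ'Q u hu, ← hψ'Q w hw]; exact heq)
      · -- maps into matching vertices
        intro a ha
        rcases Finset.mem_union.mp ha with haP | haQ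
        · rw [hψ'P a haP]; exact hψmaps a haP
        · rw [hψ'Q a haQ]
          have hp1p2 : p.1 ∪ p.2 ⊆ matchingVerts M :=
            Finset.le_sup (f := fun q => q.1 ∪ q.2) hpM
          exact hp1p2 (hQImsub' (Finset.mem_image_of_mem ψQ haQ))
      · -- discrepancy
        intro q hq
        rw [himgU]
        by_cases hqp : q = p
        · subst hqp
          have hdC : Disjoint (q.1 ∩ U) (q.1 ∩ Q.image ψQ) :=
            Finset.disjoint_of_subset_left Finset.inter_subset_right
              (Finset.disjoint_of_subset_right Finset.inter_subset_right hUdisjIm)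
          have hdD : Disjoint (q.2 ∩ U) (q.2 ∩ Q.image ψQ) :=
            Finset.disjoint_of_subset_left Finset.inter_subset_right
              (Finset.disjoint_of_subset_right Finset.inter_subset_right hUdisjIm)
          rw [Finset.inter_union_distrib_left, Finset.inter_union_distrib_left,
            Finset.card_union_of_disjoint hdC, Finset.card_union_of_disjoint hdD, hc1, hc2]
          have harr : (((q.1 ∩ U).card + cC : ℕ) : ℝ) + (f q : ℝ)
              - (((q.2 ∩ U).card + cD : ℕ) : ℝ)
              = (((q.1 ∩ U).card : ℝ) + (f q : ℝ) - ((q.2 ∩ U).card : ℝ))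
                + ((cC : ℝ) - (cD : ℝ)) := by push_cast; ring
          rw [harr]
          exact hbalance
        · have hdisjq := hM3 q hq p hpM hqp
          have hq1 : q.1 ∩ Q.image ψQ = ∅ := by
            apply Finset.disjoint_iff_inter_eq_empty.mp
            exact Finset.disjoint_of_subset_right hQImsub'
              (Finset.disjoint_union_right.mpr ⟨hdisjq.1, hdisjq.2.1⟩)
          have hq2 : q.2 ∩ Q.image ψQ = ∅ := by
            apply Finset.disjoint_iff_inter_eq_empty.mp
            exact Finset.disjoint_of_subset_right hQImsub'
              (Finset.disjoint_union_right.mpr ⟨hdisjq.2.2.1, hdisjq.2.2.2⟩)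
          rw [Finset.inter_union_distrib_left, Finset.inter_union_distrib_left, hq1, hq2,
            Finset.union_empty, Finset.union_empty]
          exact hψdisc q hq

  -- base case and conclusion
  have hbase : ∃ ψ : W → V,
      (∀ a ∈ (∅ : Finset W), ∀ b ∈ (∅ : Finset W), T.Adj a b → G.Adj (ψ a) (ψ b)) ∧
      Set.InjOn ψ ↑(∅ : Finset W) ∧
      (∀ a ∈ (∅ : Finset W), ψ a ∈ matchingVerts M) ∧
      (∀ p ∈ M, |((p.1 ∩ (∅ : Finset W).image ψ).card : ℝ) + (f p : ℝ)
        - ((p.2 ∩ (∅ : Finset W).image ψ).card : ℝ)| ≤ τ * k) := by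
    refine ⟨fun _ => v, by simp, by simp, by simp, ?_⟩
    intro p hp
    simpa using hf p hp
  obtain ⟨ψ, hhom, hinj, hmaps, hdisc⟩ := grow (R₀ \ ∅).card ∅ (Finset.empty_subset _)
    (by intro a b ha hb h; simp at h) rfl hbase
  -- final embedding
  set φ₀ : W → V := fun a => if a = r then v else ψ a with hφ₀
  have hφ₀r : φ₀ r = v := if_pos rfl
  have hφ₀ne : ∀ a : W, a ≠ r → φ₀ a = ψ a := fun a ha => if_neg ha
  have hmapsφ : ∀ a : W, a ≠ r → φ₀ a ∈ matchingVerts M := by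
    intro a ha
    rw [hφ₀ne a ha]
    exact hmaps a ((hR₀mem a).mpr ha)
  have hadj : ∀ a b : W, T.Adj a b → G.Adj (φ₀ a) (φ₀ b) := by
    intro a b hab
    by_cases ha : a = r
    · have hb : b ≠ r := by intro h; rw [ha, h] at hab; exact T.irrefl hab
      rw [ha, hφ₀r, hφ₀ne b hb]
      exact hnbr _ (hmaps b ((hR₀mem b).mpr hb))
    · by_cases hb : b = r
      · rw [hb, hφ₀r, hφ₀ne a ha]
        exact (hnbr _ (hmaps a ((hR₀mem a).mpr ha))).symm
      · rw [hφ₀ne a ha, hφ₀ne b hb]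
        exact hhom a ((hR₀mem a).mpr ha) b ((hR₀mem b).mpr hb) hab
  have hinjφ : Function.Injective φ₀ := by
    intro a b hab
    by_cases ha : a = r <;> by_cases hb : b = r
    · rw [ha, hb]
    · exfalso
      rw [ha, hφ₀r, hφ₀ne b hb] at hab
      exact hvnot (hab ▸ hmaps b ((hR₀mem b).mpr hb))
    · exfalso
      rw [hb, hφ₀r, hφ₀ne a ha] at hab
      exact hvnot (hab.symm ▸ hmaps a ((hR₀mem a).mpr ha))
    · rw [hφ₀ne a ha, hφ₀ne b hb] at hab
      exact hinj ((hR₀mem a).mpr ha) ((hR₀mem b).mpr hb) hab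
  have hrange : ∀ (A : Finset V), A ⊆ matchingVerts M →
      ((A : Set V) ∩ Set.range φ₀) = ↑(A ∩ R₀.image ψ) := by
    intro A hA
    ext u
    simp only [Set.mem_inter_iff, Finset.coe_inter, Set.mem_range, Finset.mem_coe,
      Finset.mem_image]
    constructor
    · rintro ⟨huA, a, rfl⟩
      refine ⟨huA, ?_⟩
      by_cases ha : a = r
      · exfalso
        rw [ha, hφ₀r] at huA
        exact hvnot (hA huA)
      · exact ⟨a, (hR₀mem a).mpr ha, (hφ₀ne a ha).symm⟩
    · rintro ⟨huA, a, haR, rfl⟩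
      exact ⟨huA, a, hφ₀ne a ((hR₀mem a).mp haR)⟩
  have hfinal : ∀ p ∈ M,
      |(((p.1 : Set V) ∩ Set.range φ₀).ncard : ℝ) + (f p : ℝ)
        - (((p.2 : Set V) ∩ Set.range φ₀).ncard : ℝ)| ≤ τ * k := by
    intro p hp
    have hsub : p.1 ∪ p.2 ⊆ matchingVerts M :=
      Finset.le_sup (f := fun q => q.1 ∪ q.2) hp
    have hp1 : p.1 ⊆ matchingVerts M := le_trans Finset.subset_union_left hsub
    have hp2 : p.2 ⊆ matchingVerts M := le_trans Finset.subset_union_right hsub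
    rw [hrange p.1 hp1, hrange p.2 hp2, Set.ncard_coe_finset, Set.ncard_coe_finset]
    exact hdisc p hp
  exact ⟨⟨φ₀, fun {a b} hab => hadj a b hab⟩, hinjφ, hφ₀r, hmapsφ,
    fun p hp => hfinal p hp⟩
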